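/- arXiv:math-ph/0410053 — 2 statements merged into one kernel-verified Lean document; each statement's English description precedes it below -/
import Mathlib

section
/- Let f : ℕ → ℝ be bounded, 0 ≤ f(x) ≤ C for all x, satisfying f(x) = Σ_{y=0}^{x} f(x-y) q_x(y) for all x, where each q_x is a probability measure on the nonnegative integers. Assume: (i) (compactness) for every ε > 0 there exists K(ε) with Σ_{y=0}^{K(ε)} q_x(y) ≥ 1 - ε uniformly in x; (ii) (lower bound) for every T there exists X(T) < ∞ such that F_T := inf_{x ≥ X(T)} inf_{1 ≤ y ≤ T} q_x(y) > 0. Let M = limsup_{x→∞} f(x). Then for every T ∈ ℕ and every ε > 0 there exists K₁ such that min_{x ∈ [K₁, K₁+T]} f(x) ≥ M - ε. -/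
open scoped BigOperators

/-- Flattening lemma: a bounded nonnegative solution of the discrete
self-averaging equation with tight kernels having uniform lower bounds
comes within `ε` of its limsup on arbitrarily long segments. -/
theorem stmt2
    (f : ℕ → ℝ) (q : ℕ → ℕ → ℝ) (C : ℝ)
    (hf0 : ∀ x, 0 ≤ f x) (hfC : ∀ x, f x ≤ C)
    (hq0 : ∀ x y, 0 ≤ q x y) (hq1 : ∀ x, ∑' y : ℕ, q x y = 1)
    (heq : ∀ x, f x = ∑ y ∈ Finset.range (x + 1), f (x - y) * q x y)
    (hcompact : ∀ ε : ℝ, 0 < ε → ∃ K : ℕ, ∀ x,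
      1 - ε ≤ ∑ y ∈ Finset.range (K + 1), q x y)
    (hlower : ∀ T : ℕ, ∃ X : ℕ, ∃ F : ℝ, 0 < F ∧
      ∀ x, X ≤ x → ∀ y, 1 ≤ y → y ≤ T → F ≤ q x y)
    (M : ℝ) (hM : M = Filter.limsup f Filter.atTop) :
    ∀ T : ℕ, ∀ ε : ℝ, 0 < ε → ∃ K₁ : ℕ, ∀ x, K₁ ≤ x → x ≤ K₁ + T → M - ε ≤ f x := by
  intro T ε hε
  have hC : (0:ℝ) ≤ C := le_trans (hf0 0) (hfC 0)
  -- summability of each kernel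
  have hsum : ∀ x, Summable (q x) := by
    intro x
    by_contra h
    have h2 := hq1 x
    rw [tsum_eq_zero_of_not_summable h] at h2
    exact one_ne_zero h2.symm
  have hsumle : ∀ x (s : Finset ℕ), ∑ y ∈ s, q x y ≤ 1 := by
    intro x s
    rw [← hq1 x]
    exact Summable.sum_le_tsum s (fun i _ => hq0 x i) (hsum x)
  -- boundedness facts for limsup
  have hbdd : Filter.IsBoundedUnder (· ≤ ·) Filter.atTop f :=
    Filter.isBoundedUnder_of ⟨C, fun x => hfC x⟩
  have hcobdd : Filter.IsCoboundedUnder (· ≤ ·) Filter.atTop f :=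
    Filter.IsBoundedUnder.isCoboundedUnder_le
      (Filter.isBoundedUnder_of ⟨0, fun x => hf0 x⟩)
  have hM0 : 0 ≤ M := by
    rw [hM]
    exact Filter.le_limsup_of_frequently_le
      (Filter.Frequently.of_forall hf0) hbdd
  obtain ⟨X, F, hF, hFq⟩ := hlower T
  set F' : ℝ := min F 1 with hF'def
  have hF'pos : 0 < F' := lt_min hF one_pos
  have hF'le1 : F' ≤ 1 := min_le_right _ _
  have hF'leF : F' ≤ F := min_le_left _ _
  set δ : ℝ := ε * F' / 8 with hδdef
  have hδpos : 0 < δ := by positivity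
  have hδε : δ ≤ ε := by
    rw [hδdef]; nlinarith
  set ε' : ℝ := ε * F' / (8 * (C + 1)) with hε'def
  have hε'pos : 0 < ε' := by positivity
  have hCε' : C * ε' ≤ ε * F' / 8 := by
    have hC1 : (0:ℝ) < C + 1 := by linarith
    have h1 : ε' * (C + 1) = ε * F' / 8 := by
      rw [hε'def]; field_simp
    nlinarith [hε'pos.le]
  obtain ⟨K, hK⟩ := hcompact ε' hε'pos
  set K' : ℕ := max K T with hK'def
  have hK'T : T ≤ K' := le_max_right _ _
  have hK'K : K ≤ K' := le_max_left _ _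
  -- eventual upper bound
  have hev : ∀ᶠ x in Filter.atTop, f x < M + δ := by
    apply Filter.eventually_lt_of_limsup_lt _ hbdd
    rw [← hM]; linarith
  obtain ⟨N, hN⟩ := Filter.eventually_atTop.mp hev
  -- frequent near-maximum
  have hfreq : ∃ᶠ x in Filter.atTop, M - δ < f x := by
    apply Filter.frequently_lt_of_lt_limsup hcobdd
    rw [← hM]; linarith
  obtain ⟨x, hx, hxf⟩ := Filter.frequently_atTop.mp hfreq (max X (N + K'))
  have hxX : X ≤ x := le_trans (le_max_left _ _) hx
  have hxNK : N + K' ≤ x := le_trans (le_max_right _ _) hx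
  have hxK' : K' ≤ x := le_trans (Nat.le_add_left _ _) hxNK
  -- upper bound on f near infinity
  have hup : ∀ y, y ≤ K' → f (x - y) ≤ M + δ := by
    intro y hy
    have : N ≤ x - y := by omega
    exact le_of_lt (hN _ this)
  -- the key claim
  have key : ∀ y, 1 ≤ y → y ≤ T → M - ε ≤ f (x - y) := by
    intro y₀ hy₀1 hy₀T
    by_contra hcon
    push_neg at hcon
    have hqy₀ : F' ≤ q x y₀ := le_trans hF'leF (hFq x hxX y₀ hy₀1 hy₀T)
    have hy₀K' : y₀ ∈ Finset.range (K' + 1) := by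
      simp [Finset.mem_range]; omega
    -- split the sum
    have hsplit : f x = (∑ y ∈ Finset.range (K' + 1), f (x - y) * q x y)
        + ∑ y ∈ Finset.Ico (K' + 1) (x + 1), f (x - y) * q x y := by
      rw [heq x, Finset.range_eq_Ico,
        ← Finset.sum_Ico_consecutive _ (Nat.zero_le (K'+1)) (by omega : K'+1 ≤ x+1), ← Finset.range_eq_Ico]
    -- head bound
    have hhead : ∑ y ∈ Finset.range (K' + 1), f (x - y) * q x y
        ≤ (M + δ) - (δ + ε) * F' := by
      have h1 : ∑ y ∈ Finset.range (K' + 1), f (x - y) * q x y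
          = f (x - y₀) * q x y₀
            + ∑ y ∈ (Finset.range (K' + 1)).erase y₀, f (x - y) * q x y :=
        (Finset.add_sum_erase _ _ hy₀K').symm
      have h2 : ∑ y ∈ (Finset.range (K' + 1)).erase y₀, f (x - y) * q x y
          ≤ (M + δ) * ∑ y ∈ (Finset.range (K' + 1)).erase y₀, q x y := by
        rw [Finset.mul_sum]
        apply Finset.sum_le_sum
        intro i hi
        have hiK : i ≤ K' := by
          have := Finset.mem_range.mp (Finset.mem_of_mem_erase hi); omega
        exact mul_le_mul_of_nonneg_right (hup i hiK) (hq0 x i)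
      have h3 : ∑ y ∈ (Finset.range (K' + 1)).erase y₀, q x y
          = (∑ y ∈ Finset.range (K' + 1), q x y) - q x y₀ := by
        rw [← Finset.add_sum_erase _ _ hy₀K']; ring
      have h4 : ∑ y ∈ (Finset.range (K' + 1)).erase y₀, q x y ≤ 1 - q x y₀ := by
        rw [h3]
        have := hsumle x (Finset.range (K' + 1))
        linarith
      have h5 : f (x - y₀) * q x y₀ ≤ (M - ε) * q x y₀ :=
        mul_le_mul_of_nonneg_right (le_of_lt hcon) (hq0 x y₀)
      have hMδ : 0 ≤ M + δ := by linarith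
      have h6 : (M + δ) * ∑ y ∈ (Finset.range (K' + 1)).erase y₀, q x y
          ≤ (M + δ) * (1 - q x y₀) :=
        mul_le_mul_of_nonneg_left h4 hMδ
      have h7 : (M - ε) * q x y₀ + (M + δ) * (1 - q x y₀)
          = (M + δ) - (δ + ε) * q x y₀ := by ring
      have h8 : (δ + ε) * F' ≤ (δ + ε) * q x y₀ :=
        mul_le_mul_of_nonneg_left hqy₀ (by linarith)
      rw [h1]
      linarith
    -- tail bound
    have htailq : ∑ y ∈ Finset.Ico (K' + 1) (x + 1), q x y ≤ ε' := by
      have hsub : Finset.range (K + 1) ⊆ Finset.range (K' + 1) := by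
        apply Finset.range_subset_range.mpr; omega
      have h1 : 1 - ε' ≤ ∑ y ∈ Finset.range (K' + 1), q x y :=
        le_trans (hK x)
          (Finset.sum_le_sum_of_subset_of_nonneg hsub (fun i _ _ => hq0 x i))
      have h2 : (∑ y ∈ Finset.range (K' + 1), q x y)
          + ∑ y ∈ Finset.Ico (K' + 1) (x + 1), q x y ≤ 1 := by
        rw [Finset.range_eq_Ico,
          Finset.sum_Ico_consecutive _ (Nat.zero_le _) (by omega : K' + 1 ≤ x + 1)]
        rw [← Finset.range_eq_Ico]
        exact hsumle x _
      linarith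
    have htail : ∑ y ∈ Finset.Ico (K' + 1) (x + 1), f (x - y) * q x y ≤ C * ε' := by
      calc ∑ y ∈ Finset.Ico (K' + 1) (x + 1), f (x - y) * q x y
          ≤ ∑ y ∈ Finset.Ico (K' + 1) (x + 1), C * q x y := by
            apply Finset.sum_le_sum
            intro i _
            exact mul_le_mul_of_nonneg_right (hfC _) (hq0 x i)
        _ = C * ∑ y ∈ Finset.Ico (K' + 1) (x + 1), q x y := by
            rw [Finset.mul_sum]
        _ ≤ C * ε' := mul_le_mul_of_nonneg_left htailq hC
    have hfinal : f x ≤ (M + δ) - (δ + ε) * F' + C * ε' := by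
      rw [hsplit]; linarith
    -- contradiction
    have : M - δ < (M + δ) - (δ + ε) * F' + C * ε' := lt_of_lt_of_le hxf hfinal
    rw [hδdef] at this
    nlinarith [mul_pos hε hF'pos, mul_le_mul_of_nonneg_left hF'le1 (le_of_lt hε)]
  -- conclude
  refine ⟨x - T, fun z hz1 hz2 => ?_⟩
  have hxT : T ≤ x := le_trans hK'T hxK'
  rcases eq_or_lt_of_le (show z ≤ x by omega) with heq' | hlt
  · subst heq'; linarith
  · have hy : z = x - (x - z) := by omega
    rw [hy]
    exact key (x - z) (by omega) (by omega)
end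

section
/- Under the hypotheses of the flattening lemma, fix T ∈ ℕ and ε > 0 with ε < F_T·(desired smallness). For δ > 0 small, suppose f(x) < M + δ for all x > S(δ), Σ_{x ≥ R - S} q_y(x) < δ for all y ≥ R, and there is a point y > R + T with f(y) > M - δ. Let A = {x ∈ [y-T, y] : f(x) < M - ε} and a = Σ_{t : y - t ∈ A} q_y(t). Then a < (2+C)δ / (ε + δ). -/
open scoped BigOperators

/-- Key computation in the flattening lemma: the kernel mass `a` of the bad set
`A = {x ∈ [y-T, y] : f x < M - ε}` near a point `y` with `f y > M - δ`
is bounded by `(2+C)δ/(ε+δ)`. -/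
theorem stmt3
    (f : ℕ → ℝ) (q : ℕ → ℕ → ℝ) (C M ε δ : ℝ) (T S R y : ℕ)
    (hf0 : ∀ x, 0 ≤ f x) (hfC : ∀ x, f x ≤ C)
    (hq0 : ∀ x t, 0 ≤ q x t) (hq1 : ∀ x, ∑' t : ℕ, q x t = 1)
    (heq : ∀ x, f x = ∑ t ∈ Finset.range (x + 1), f (x - t) * q x t)
    (hM : M = Filter.limsup f Filter.atTop)
    (hε : 0 < ε) (hδ : 0 < δ)
    (hSR : S < R)
    (hS : ∀ x, S < x → f x < M + δ)
    (htail : ∀ z, R ≤ z → (∑' t : ℕ, if R - S ≤ t then q z t else 0) < δ)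
    (hy : R + T < y) (hfy : M - δ < f y)
    (a : ℝ)
    (ha : a = ∑ t ∈ Finset.range (T + 1), if f (y - t) < M - ε then q y t else 0) :
    a < (2 + C) * δ / (ε + δ) := by
  have hq_sum : Summable (q y) := by
    by_contra h
    have := tsum_eq_zero_of_not_summable h
    rw [hq1 y] at this; norm_num at this
  have hC0 : (0:ℝ) ≤ C := le_trans (hf0 0) (hfC 0)
  have hM0 : (0:ℝ) ≤ M := by
    rw [hM]
    exact Filter.le_limsup_of_frequently_le (Filter.Frequently.of_forall hf0)
      (Filter.isBoundedUnder_of ⟨C, fun x => hfC x⟩)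
  set Q := Finset.range (y + 1) with hQ
  set indb : ℕ → ℝ := fun t => if t ≤ T ∧ f (y - t) < M - ε then q y t else 0 with hindb
  set indg : ℕ → ℝ := fun t =>
    if ¬(t ≤ T ∧ f (y - t) < M - ε) ∧ t < R - S then q y t else 0 with hindg
  set indt : ℕ → ℝ := fun t =>
    if ¬(t ≤ T ∧ f (y - t) < M - ε) ∧ ¬(t < R - S) then q y t else 0 with hindt
  set Sb := ∑ t ∈ Q, indb t with hSb
  set Sg := ∑ t ∈ Q, indg t with hSg
  set St := ∑ t ∈ Q, indt t with hSt
  -- pointwise bound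
  have hpt : ∀ t ∈ Q, f (y - t) * q y t ≤ (M - ε) * indb t + (M + δ) * indg t + C * indt t := by
    intro t ht
    simp only [hQ, Finset.mem_range] at ht
    by_cases hb : t ≤ T ∧ f (y - t) < M - ε
    · simp only [hindb, hindg, hindt, if_pos hb, if_neg (by tauto : ¬(¬(t ≤ T ∧ f (y - t) < M - ε) ∧ t < R - S)), if_neg (by tauto : ¬(¬(t ≤ T ∧ f (y - t) < M - ε) ∧ ¬(t < R - S)))]
      have := mul_le_mul_of_nonneg_right (le_of_lt hb.2) (hq0 y t)
      linarith
    · by_cases hg : t < R - S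
      · simp only [hindb, hindg, hindt, if_neg hb, if_pos (⟨hb, hg⟩ : ¬(t ≤ T ∧ f (y - t) < M - ε) ∧ t < R - S), if_neg (by tauto : ¬(¬(t ≤ T ∧ f (y - t) < M - ε) ∧ ¬(t < R - S)))]
        have hSlt : S < y - t := by omega
        have := mul_le_mul_of_nonneg_right (le_of_lt (hS _ hSlt)) (hq0 y t)
        linarith
      · simp only [hindb, hindg, hindt, if_neg hb, if_neg (by tauto : ¬(¬(t ≤ T ∧ f (y - t) < M - ε) ∧ t < R - S)), if_pos (⟨hb, hg⟩ : ¬(t ≤ T ∧ f (y - t) < M - ε) ∧ ¬(t < R - S))]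
        have := mul_le_mul_of_nonneg_right (hfC (y - t)) (hq0 y t)
        linarith
  have key : f y ≤ (M - ε) * Sb + (M + δ) * Sg + C * St := by
    calc f y = ∑ t ∈ Q, f (y - t) * q y t := heq y
    _ ≤ ∑ t ∈ Q, ((M - ε) * indb t + (M + δ) * indg t + C * indt t) :=
        Finset.sum_le_sum hpt
    _ = (M - ε) * Sb + (M + δ) * Sg + C * St := by
        simp only [Finset.sum_add_distrib, ← Finset.mul_sum, hSb, hSg, hSt]
  -- Sb = a
  have hSba : Sb = a := by
    rw [hSb, ha]
    rw [← Finset.sum_subset (Finset.range_subset_range.2 (by omega : T + 1 ≤ y + 1))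
      (fun x _ hx => by
        simp only [Finset.mem_range] at hx
        simp only [hindb, if_neg (by omega : ¬(x ≤ T ∧ f (y - x) < M - ε))])]
    apply Finset.sum_congr rfl
    intro t ht
    simp only [Finset.mem_range] at ht
    simp only [hindb]
    have hiff : (t ≤ T ∧ f (y - t) < M - ε) ↔ f (y - t) < M - ε := by
      simp [show t ≤ T by omega]
    exact if_congr hiff rfl rfl
  -- nonnegativity of the indicator sums
  have hg_nn : 0 ≤ Sg := Finset.sum_nonneg fun t _ => by
    simp only [hindg]; split_ifs; exacts [hq0 y t, le_refl 0]
  -- Sb + Sg ≤ 1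
  have hbg : Sb + Sg ≤ 1 := by
    have h1 : Sb + Sg = ∑ t ∈ Q, (indb t + indg t) := by
      rw [Finset.sum_add_distrib]
    have h2 : ∀ t ∈ Q, indb t + indg t ≤ q y t := by
      intro t _
      simp only [hindb, hindg]
      split_ifs with h h' h' <;> first | linarith [hq0 y t] | tauto
    calc Sb + Sg = ∑ t ∈ Q, (indb t + indg t) := h1
      _ ≤ ∑ t ∈ Q, q y t := Finset.sum_le_sum h2
      _ ≤ ∑' t, q y t := Summable.sum_le_tsum Q (fun t _ => hq0 y t) hq_sum
      _ = 1 := hq1 y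
  -- St < δ
  have htail_sum : Summable (fun t => if R - S ≤ t then q y t else 0) := by
    apply Summable.of_nonneg_of_le (fun t => ?_) (fun t => ?_) hq_sum
    · split_ifs; exacts [hq0 y t, le_refl 0]
    · split_ifs; exacts [le_refl _, hq0 y t]
  have hStδ : St < δ := by
    have h2 : ∀ t ∈ Q, indt t ≤ if R - S ≤ t then q y t else 0 := by
      intro t _
      simp only [hindt]
      split_ifs with h h' <;> first | exact le_refl _ | exact hq0 y t | omega | linarith [hq0 y t]
    calc St ≤ ∑ t ∈ Q, if R - S ≤ t then q y t else 0 := Finset.sum_le_sum h2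
      _ ≤ ∑' t, if R - S ≤ t then q y t else 0 :=
          Summable.sum_le_tsum Q (fun t _ => by split_ifs; exacts [hq0 y t, le_refl 0]) htail_sum
      _ < δ := htail y (by omega)
  -- combine
  have hMδ : (0:ℝ) < M + δ := by linarith
  have hcomb : M - δ < (M - ε) * a + (M + δ) * (1 - a) + C * δ := by
    have h3 : (M + δ) * Sg ≤ (M + δ) * (1 - a) := by
      apply mul_le_mul_of_nonneg_left _ hMδ.le
      linarith [hbg, hSba]
    have h4 : C * St ≤ C * δ := mul_le_mul_of_nonneg_left hStδ.le hC0
    calc M - δ < f y := hfy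
      _ ≤ (M - ε) * Sb + (M + δ) * Sg + C * St := key
      _ = (M - ε) * a + (M + δ) * Sg + C * St := by rw [hSba]
      _ ≤ (M - ε) * a + (M + δ) * (1 - a) + C * δ := by linarith
  rw [lt_div_iff₀ (by linarith : (0:ℝ) < ε + δ)]
  nlinarith [hcomb]
end
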